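/- Let ψ₀(t) = 8t(t²−1)/(t²+1)³, ζ₀(t) = 1/(t²+1), θ₀(t) = ∫_{t²}^∞ log(s+1)/(s(s+1)) ds. Then ∫₀^∞ ψ₀θ₀² dt = 8ζ(3) − 23/2, ∫₀^∞ ψ₀ζ₀θ₀² dt = (68/9)ζ(3) − 3517/324, and ∫₀^∞ ψ₀ζ₀²θ₀² dt = (62/9)ζ(3) − 51127/5184. -/

import Mathlib

open MeasureTheory Real Set Filter Topology intervalIntegral

noncomputable def psi0 (t : ℝ) : ℝ := 8 * t * (t ^ 2 - 1) / (t ^ 2 + 1) ^ 3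
noncomputable def zeta0 (t : ℝ) : ℝ := 1 / (t ^ 2 + 1)
noncomputable def theta0 (t : ℝ) : ℝ :=
  ∫ s in Set.Ioi (t ^ 2), Real.log (s + 1) / (s * (s + 1))

/-- `ζ(3) = ∑_{n ≥ 1} 1/n³`. -/
noncomputable def zeta3 : ℝ := ∑' n : ℕ, 1 / ((n : ℝ) + 1) ^ 3


-- basic log bounds
lemma neg_log_le_two_div_sqrt {u : ℝ} (hu : 0 < u) : -Real.log u ≤ 2 / Real.sqrt u := by
  have hs : 0 < Real.sqrt u := Real.sqrt_pos.2 hu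
  have h1 : Real.log (Real.sqrt u)⁻¹ ≤ (Real.sqrt u)⁻¹ - 1 :=
    Real.log_le_sub_one_of_pos (by positivity)
  have h2 : Real.log (Real.sqrt u)⁻¹ = -(1/2 * Real.log u) := by
    rw [Real.log_inv, Real.log_sqrt hu.le]; ring
  rw [h2] at h1
  have : (Real.sqrt u)⁻¹ = 1 / Real.sqrt u := by ring
  rw [this] at h1
  have h3 : (0:ℝ) < 1 / Real.sqrt u := by positivity
  have h4 : 2 / Real.sqrt u = 2 * (1 / Real.sqrt u) := by ring
  linarith [h1]

lemma neg_log_le_four_div {u : ℝ} (hu : 0 < u) : -Real.log u ≤ 4 / Real.sqrt (Real.sqrt u) := by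
  have hs : 0 < Real.sqrt u := Real.sqrt_pos.2 hu
  have h := neg_log_le_two_div_sqrt hs
  rw [Real.log_sqrt hu.le] at h
  have h4 : 4 / Real.sqrt (Real.sqrt u) = 2 * (2 / Real.sqrt (Real.sqrt u)) := by ring
  linarith

lemma neg_log_le_near_one {u : ℝ} (hu : 0 < u) (hu2 : 1/2 ≤ u) (hu1 : u ≤ 1) :
    -Real.log u ≤ 2 * (1 - u) := by
  have h1 : Real.log u⁻¹ ≤ u⁻¹ - 1 := Real.log_le_sub_one_of_pos (by positivity)
  rw [Real.log_inv] at h1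
  have h2 : u⁻¹ - 1 = (1 - u) / u := by field_simp
  rw [h2] at h1
  have : (1 - u) / u ≤ 2 * (1 - u) := by
    rw [div_le_iff₀ hu]
    nlinarith
  linarith

lemma log_nonpos_of_Ioo {u : ℝ} (hu : u ∈ Ioo (0:ℝ) 1) : Real.log u ≤ 0 :=
  Real.log_nonpos hu.1.le hu.2.le

-- integrability of 1/sqrt on (0,1)
lemma integrableOn_one_div_sqrt : IntegrableOn (fun u => 1 / Real.sqrt u) (Ioo (0:ℝ) 1) := by
  have h : IntervalIntegrable (fun x : ℝ => x ^ (-(1:ℝ)/2)) volume 0 1 :=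
    intervalIntegrable_rpow' (by norm_num)
  rw [intervalIntegrable_iff_integrableOn_Ioo_of_le (by norm_num : (0:ℝ) ≤ 1)] at h
  apply h.congr_fun ?_ measurableSet_Ioo
  intro x hx
  show x ^ (-1/2 : ℝ) = 1 / Real.sqrt x
  rw [Real.sqrt_eq_rpow, one_div, ← Real.rpow_neg hx.1.le]
  norm_num

lemma integrableOn_of_sqrt_bound {f : ℝ → ℝ}
    (hm : AEStronglyMeasurable f (volume.restrict (Ioo (0:ℝ) 1))) {C : ℝ}
    (hb : ∀ u ∈ Ioo (0:ℝ) 1, ‖f u‖ ≤ C / Real.sqrt u) : IntegrableOn f (Ioo (0:ℝ) 1) := by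
  have hC : Integrable (fun u => C * (1 / Real.sqrt u)) (volume.restrict (Ioo (0:ℝ) 1)) :=
    integrableOn_one_div_sqrt.const_mul C
  refine Integrable.mono' hC hm ?_
  refine (ae_restrict_iff' measurableSet_Ioo).2 (ae_of_all _ ?_)
  intro u hu
  calc ‖f u‖ ≤ C / Real.sqrt u := hb u hu
    _ = C * (1 / Real.sqrt u) := by ring

-- core pointwise bounds (on (0,1))
lemma logsq_le {u : ℝ} (hu : u ∈ Ioo (0:ℝ) 1) : Real.log u ^ 2 ≤ 16 / Real.sqrt u := by
  have hu0 := hu.1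
  have hs : 0 < Real.sqrt u := Real.sqrt_pos.2 hu0
  have hw : 0 < Real.sqrt (Real.sqrt u) := Real.sqrt_pos.2 hs
  have hws : Real.sqrt (Real.sqrt u) * Real.sqrt (Real.sqrt u) = Real.sqrt u :=
    Real.mul_self_sqrt hs.le
  have hL0 : 0 ≤ -Real.log u := by
    have := Real.log_nonpos hu0.le hu.2.le; linarith
  have h4 := neg_log_le_four_div hu0
  have hmul : (-Real.log u) * (-Real.log u) ≤
      (4 / Real.sqrt (Real.sqrt u)) * (4 / Real.sqrt (Real.sqrt u)) :=
    mul_le_mul h4 h4 hL0 (by positivity)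
  have he : (4 / Real.sqrt (Real.sqrt u)) * (4 / Real.sqrt (Real.sqrt u)) = 16 / Real.sqrt u := by
    rw [div_mul_div_comm, hws]; norm_num
  nlinarith

lemma logsq_frac_le {u : ℝ} (hu : u ∈ Ioo (0:ℝ) 1) :
    Real.log u ^ 2 / (1 - u) ≤ 34 / Real.sqrt u := by
  have hu0 := hu.1
  have hu1 := hu.2
  have h1u : (0:ℝ) < 1 - u := by linarith
  have hs : 0 < Real.sqrt u := Real.sqrt_pos.2 hu0
  have hs1 : Real.sqrt u ≤ 1 := by
    rw [show (1:ℝ) = Real.sqrt 1 by simp]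
    exact Real.sqrt_le_sqrt hu1.le
  set t : ℝ := (Real.sqrt u)⁻¹ with hts
  have ht0 : 0 < t := by positivity
  have ht1 : 1 ≤ t := by
    rw [hts, le_inv_comm₀ one_pos hs]
    simpa using hs1
  have e34 : 34 / Real.sqrt u = 34 * t := by rw [hts]; ring
  rw [e34, div_le_iff₀ h1u]
  rcases le_or_gt u (1/2) with hc | hc
  · have hls := logsq_le hu
    have e16 : 16 / Real.sqrt u = 16 * t := by rw [hts]; ring
    rw [e16] at hls
    nlinarith [mul_nonneg ht0.le (by linarith : (0:ℝ) ≤ 1 - 2*u)]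
  · have hL := neg_log_le_near_one hu0 (by linarith) hu1.le
    have hL0 : 0 ≤ -Real.log u := by
      have := Real.log_nonpos hu0.le hu1.le; linarith
    have hsq : Real.log u ^ 2 ≤ 4 * (1-u)^2 := by nlinarith
    nlinarith [mul_pos h1u ht0, mul_pos (mul_pos h1u h1u) ht0,
      mul_le_mul_of_nonneg_left ht1 (mul_nonneg h1u.le h1u.le)]

lemma h_frac_le {u : ℝ} (hu : u ∈ Ioo (0:ℝ) 1) :
    -Real.log u / (1 - u) ≤ 6 / Real.sqrt u := by
  have hu0 := hu.1
  have hu1 := hu.2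
  have h1u : (0:ℝ) < 1 - u := by linarith
  have hs : 0 < Real.sqrt u := Real.sqrt_pos.2 hu0
  have hs1 : Real.sqrt u ≤ 1 := by
    rw [show (1:ℝ) = Real.sqrt 1 by simp]
    exact Real.sqrt_le_sqrt hu1.le
  set t : ℝ := (Real.sqrt u)⁻¹ with hts
  have ht0 : 0 < t := by positivity
  have ht1 : 1 ≤ t := by
    rw [hts, le_inv_comm₀ one_pos hs]
    simpa using hs1
  have hL0 : 0 ≤ -Real.log u := by
    have := Real.log_nonpos hu0.le hu1.le; linarith
  have e6 : 6 / Real.sqrt u = 6 * t := by rw [hts]; ring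
  rw [e6, div_le_iff₀ h1u]
  rcases le_or_gt u (1/2) with hc | hc
  · have hL := neg_log_le_two_div_sqrt hu0
    have e2 : 2 / Real.sqrt u = 2 * t := by rw [hts]; ring
    rw [e2] at hL
    nlinarith [mul_nonneg ht0.le (by linarith : (0:ℝ) ≤ 2 - 3*u)]
  · have hL := neg_log_le_near_one hu0 (by linarith) hu1.le
    nlinarith [mul_le_mul_of_nonneg_left ht1 (mul_nonneg h1u.le h1u.le)]

lemma h_frac_nonneg {u : ℝ} (hu : u ∈ Ioo (0:ℝ) 1) : 0 ≤ -Real.log u / (1 - u) := by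
  have hL0 : 0 ≤ -Real.log u := by
    have := Real.log_nonpos hu.1.le hu.2.le; linarith
  have h1u : (0:ℝ) < 1 - u := by linarith [hu.2]
  positivity

-- integrability
lemma intOn_pow_log (n : ℕ) : IntegrableOn (fun u => u ^ n * Real.log u) (Ioo (0:ℝ) 1) := by
  apply integrableOn_of_sqrt_bound (C := 2)
  · exact ((measurable_id.pow_const n).mul Real.measurable_log).aestronglyMeasurable
  · intro u hu
    have hL0 : 0 ≤ -Real.log u := by
      have := Real.log_nonpos hu.1.le hu.2.le; linarith
    have hun : 0 ≤ u ^ n := pow_nonneg hu.1.le n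
    have hun1 : u ^ n ≤ 1 := pow_le_one₀ hu.1.le hu.2.le
    have hL := neg_log_le_two_div_sqrt hu.1
    rw [Real.norm_eq_abs, abs_mul, abs_of_nonneg hun, abs_of_nonpos (by linarith : Real.log u ≤ 0)]
    calc u ^ n * -Real.log u ≤ 1 * -Real.log u := by
          exact mul_le_mul_of_nonneg_right hun1 hL0
      _ = -Real.log u := by ring
      _ ≤ 2 / Real.sqrt u := hL

lemma intOn_pow_log_sq (n : ℕ) : IntegrableOn (fun u => u ^ n * Real.log u ^ 2) (Ioo (0:ℝ) 1) := by
  apply integrableOn_of_sqrt_bound (C := 16)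
  · exact ((measurable_id.pow_const n).mul (Real.measurable_log.pow_const 2)).aestronglyMeasurable
  · intro u hu
    have hun : 0 ≤ u ^ n := pow_nonneg hu.1.le n
    have hun1 : u ^ n ≤ 1 := pow_le_one₀ hu.1.le hu.2.le
    have hsq : (0:ℝ) ≤ Real.log u ^ 2 := sq_nonneg _
    rw [Real.norm_eq_abs, abs_mul, abs_of_nonneg hun, abs_of_nonneg hsq]
    calc u ^ n * Real.log u ^ 2 ≤ 1 * Real.log u ^ 2 := mul_le_mul_of_nonneg_right hun1 hsq
      _ = Real.log u ^ 2 := by ring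
      _ ≤ 16 / Real.sqrt u := logsq_le hu

lemma intOn_pow_log_sq_frac (n : ℕ) :
    IntegrableOn (fun u => u ^ n * (Real.log u ^ 2 / (1 - u))) (Ioo (0:ℝ) 1) := by
  apply integrableOn_of_sqrt_bound (C := 34)
  · exact ((measurable_id.pow_const n).mul
      ((Real.measurable_log.pow_const 2).div (measurable_const.sub measurable_id))).aestronglyMeasurable
  · intro u hu
    have h1u : (0:ℝ) < 1 - u := by linarith [hu.2]
    have hfr : (0:ℝ) ≤ Real.log u ^ 2 / (1 - u) := by positivity
    have hun : 0 ≤ u ^ n := pow_nonneg hu.1.le n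
    have hun1 : u ^ n ≤ 1 := pow_le_one₀ hu.1.le hu.2.le
    rw [Real.norm_eq_abs, abs_mul, abs_of_nonneg hun, abs_of_nonneg hfr]
    calc u ^ n * (Real.log u ^ 2 / (1 - u)) ≤ 1 * (Real.log u ^ 2 / (1 - u)) :=
          mul_le_mul_of_nonneg_right hun1 hfr
      _ = Real.log u ^ 2 / (1 - u) := by ring
      _ ≤ 34 / Real.sqrt u := logsq_frac_le hu

lemma intOn_h : IntegrableOn (fun u => -Real.log u / (1 - u)) (Ioo (0:ℝ) 1) := by
  apply integrableOn_of_sqrt_bound (C := 6)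
  · exact (Real.measurable_log.neg.div (measurable_const.sub measurable_id)).aestronglyMeasurable
  · intro u hu
    rw [Real.norm_eq_abs, abs_of_nonneg (h_frac_nonneg hu)]
    exact h_frac_le hu

-- limits at zero
lemma tendsto_pow_mul_log (j : ℕ) :
    Tendsto (fun u : ℝ => u ^ (j+1) * Real.log u) (𝓝[>] (0:ℝ)) (𝓝 0) := by
  have h1 : Tendsto (fun u : ℝ => Real.log u * u) (𝓝[>] (0:ℝ)) (𝓝 0) := by
    have := tendsto_log_mul_rpow_nhdsGT_zero one_pos
    refine this.congr fun u => ?_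
    rw [Real.rpow_one]
  have h2 : Tendsto (fun u : ℝ => u ^ j) (𝓝[>] (0:ℝ)) (𝓝 ((0:ℝ) ^ j)) :=
    tendsto_nhdsWithin_of_tendsto_nhds ((continuous_pow _).tendsto 0)
  have h3 := h2.mul h1
  rw [mul_zero] at h3
  refine h3.congr fun u => ?_
  ring

lemma tendsto_pow_mul_log_sq (j : ℕ) :
    Tendsto (fun u : ℝ => u ^ (j+1) * Real.log u ^ 2) (𝓝[>] (0:ℝ)) (𝓝 0) := by
  have h1 : Tendsto (fun u : ℝ => Real.log u * u ^ ((1:ℝ)/2)) (𝓝[>] (0:ℝ)) (𝓝 0) :=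
    tendsto_log_mul_rpow_nhdsGT_zero (by norm_num)
  have h2 : Tendsto (fun u : ℝ => u ^ j) (𝓝[>] (0:ℝ)) (𝓝 ((0:ℝ) ^ j)) :=
    tendsto_nhdsWithin_of_tendsto_nhds ((continuous_pow _).tendsto 0)
  have h3 := h2.mul (h1.mul h1)
  rw [mul_zero, mul_zero] at h3
  refine h3.congr' ?_
  filter_upwards [eventually_mem_nhdsWithin] with u (hu : u ∈ Ioi (0:ℝ))
  have hu0 : (0:ℝ) < u := hu
  have e : u ^ ((1:ℝ)/2) * u ^ ((1:ℝ)/2) = u := by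
    rw [← Real.rpow_add hu0]; norm_num
  calc u ^ j * (Real.log u * u ^ ((1:ℝ)/2) * (Real.log u * u ^ ((1:ℝ)/2)))
      = u ^ j * (u ^ ((1:ℝ)/2) * u ^ ((1:ℝ)/2)) * Real.log u ^ 2 := by ring
    _ = u ^ (j+1) * Real.log u ^ 2 := by rw [e]; ring

lemma continuousWithinAt_Icc_zero_of_tendsto {f : ℝ → ℝ} (h0 : f 0 = 0)
    (h : Tendsto f (𝓝[>] (0:ℝ)) (𝓝 0)) : ContinuousWithinAt f (Icc (0:ℝ) 1) 0 := by
  have h2 : Tendsto f (𝓝[insert (0:ℝ) (Ioi 0)] 0) (𝓝 0) := by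
    rw [nhdsWithin_insert]
    refine tendsto_sup.2 ⟨?_, h⟩
    have hp := tendsto_pure_nhds f 0
    rwa [h0] at hp
  have hsub : Icc (0:ℝ) 1 ⊆ insert (0:ℝ) (Ioi 0) := by
    intro x hx
    rcases eq_or_lt_of_le hx.1 with he | hl
    · exact Or.inl he.symm
    · exact Or.inr hl
  unfold ContinuousWithinAt
  rw [h0]
  exact h2.mono_left (nhdsWithin_mono 0 hsub)

lemma contOn_pow_mul_log (j : ℕ) :
    ContinuousOn (fun u : ℝ => u ^ (j+1) * Real.log u) (Icc 0 1) := by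
  intro x hx
  rcases eq_or_lt_of_le hx.1 with he | hl
  · subst he
    exact continuousWithinAt_Icc_zero_of_tendsto (by simp) (tendsto_pow_mul_log j)
  · exact (((continuous_pow (j+1)).continuousAt).mul
      (Real.continuousAt_log hl.ne')).continuousWithinAt

lemma contOn_pow_mul_log_sq (j : ℕ) :
    ContinuousOn (fun u : ℝ => u ^ (j+1) * Real.log u ^ 2) (Icc 0 1) := by
  intro x hx
  rcases eq_or_lt_of_le hx.1 with he | hl
  · subst he
    exact continuousWithinAt_Icc_zero_of_tendsto (by simp) (tendsto_pow_mul_log_sq j)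
  · exact (((continuous_pow (j+1)).continuousAt).mul
      ((Real.continuousAt_log hl.ne').pow 2)).continuousWithinAt

lemma ii_Ioo (f : ℝ → ℝ) : ∫ u in (0:ℝ)..1, f u = ∫ u in Ioo (0:ℝ) 1, f u := by
  rw [integral_of_le zero_le_one, MeasureTheory.integral_Ioc_eq_integral_Ioo]

lemma integral_pow_mul_log (n : ℕ) :
    ∫ u in Ioo (0:ℝ) 1, u ^ n * Real.log u = -(1 / ((n:ℝ)+1)^2) := by
  have hne : ((n:ℝ)+1) ≠ 0 := by positivity
  set F : ℝ → ℝ := fun u => u^(n+1) * (Real.log u / ((n:ℝ)+1) - 1/((n:ℝ)+1)^2) with hF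
  have hcont : ContinuousOn F (Icc 0 1) := by
    have hg : ContinuousOn
        (fun u : ℝ => (u^(n+1) * Real.log u) * (1/((n:ℝ)+1)) - u^(n+1) * (1/((n:ℝ)+1)^2))
        (Icc 0 1) :=
      ((contOn_pow_mul_log n).mul continuousOn_const).sub
        ((continuous_pow (n+1)).continuousOn.mul continuousOn_const)
    refine hg.congr ?_
    intro x _
    simp only [hF]
    ring
  have hderiv : ∀ x ∈ Ioo (0:ℝ) 1, HasDerivAt F (x ^ n * Real.log x) x := by
    intro x hx
    have hx0 : x ≠ 0 := ne_of_gt hx.1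
    have hlog : HasDerivAt (fun u : ℝ => Real.log u / ((n:ℝ)+1) - 1/((n:ℝ)+1)^2)
        (x⁻¹ / ((n:ℝ)+1)) x := ((Real.hasDerivAt_log hx0).div_const _).sub_const _
    have hpow := hasDerivAt_pow (n+1) x
    have hm := hpow.mul hlog
    refine hm.congr_deriv ?_
    simp only [Nat.add_sub_cancel]
    push_cast
    field_simp
    ring
  have hint : IntervalIntegrable (fun u : ℝ => u ^ n * Real.log u) volume 0 1 :=
    (intervalIntegrable_iff_integrableOn_Ioo_of_le zero_le_one).2 (intOn_pow_log n)
  have := integral_eq_sub_of_hasDerivAt_of_le zero_le_one hcont hderiv hint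
  rw [ii_Ioo] at this
  rw [this, hF]
  simp [Real.log_one]

lemma integral_pow_mul_log_sq (n : ℕ) :
    ∫ u in Ioo (0:ℝ) 1, u ^ n * Real.log u ^ 2 = 2 / ((n:ℝ)+1)^3 := by
  have hne : ((n:ℝ)+1) ≠ 0 := by positivity
  set F : ℝ → ℝ := fun u => u^(n+1) *
    (Real.log u ^ 2 / ((n:ℝ)+1) - 2 * Real.log u /((n:ℝ)+1)^2 + 2/((n:ℝ)+1)^3) with hF
  have hcont : ContinuousOn F (Icc 0 1) := by
    have hg : ContinuousOn
        (fun u : ℝ => (u^(n+1) * Real.log u ^ 2) * (1/((n:ℝ)+1))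
          - (u^(n+1) * Real.log u) * (2/((n:ℝ)+1)^2) + u^(n+1) * (2/((n:ℝ)+1)^3))
        (Icc 0 1) :=
      (((contOn_pow_mul_log_sq n).mul continuousOn_const).sub
        ((contOn_pow_mul_log n).mul continuousOn_const)).add
        ((continuous_pow (n+1)).continuousOn.mul continuousOn_const)
    refine hg.congr ?_
    intro x _
    simp only [hF]
    ring
  have hderiv : ∀ x ∈ Ioo (0:ℝ) 1, HasDerivAt F (x ^ n * Real.log x ^ 2) x := by
    intro x hx
    have hx0 : x ≠ 0 := ne_of_gt hx.1
    have hlog := Real.hasDerivAt_log hx0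
    have hinner : HasDerivAt (fun u : ℝ => Real.log u ^ 2 / ((n:ℝ)+1)
        - 2 * Real.log u /((n:ℝ)+1)^2 + 2/((n:ℝ)+1)^3)
        ((2 * Real.log x * x⁻¹) / ((n:ℝ)+1) - 2 * x⁻¹ / ((n:ℝ)+1)^2) x := by
      have h1 : HasDerivAt (fun u : ℝ => Real.log u ^ 2) (2 * Real.log x * x⁻¹) x := by
        have := hlog.pow 2
        refine this.congr_deriv ?_
        ring
      exact (((h1.div_const _).sub ((hlog.const_mul 2).div_const _)).add_const _)
    have hpow := hasDerivAt_pow (n+1) x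
    have hm := hpow.mul hinner
    refine hm.congr_deriv ?_
    simp only [Nat.add_sub_cancel]
    push_cast
    field_simp
    ring
  have hint : IntervalIntegrable (fun u : ℝ => u ^ n * Real.log u ^ 2) volume 0 1 :=
    (intervalIntegrable_iff_integrableOn_Ioo_of_le zero_le_one).2 (intOn_pow_log_sq n)
  have := integral_eq_sub_of_hasDerivAt_of_le zero_le_one hcont hderiv hint
  rw [ii_Ioo] at this
  rw [this, hF]
  simp [Real.log_one]

lemma summable_cubes : Summable (fun j : ℕ => 1 / ((j:ℝ)+1)^3) := by
  have h : Summable (fun n : ℕ => 1 / (n:ℝ) ^ 3) := by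
    rw [Real.summable_one_div_nat_pow]
    norm_num
  have h2 := (summable_nat_add_iff 1).2 h
  refine h2.congr fun j => ?_
  push_cast
  ring

lemma summable_cubes_shift (n : ℕ) : Summable (fun m : ℕ => 2 / ((n:ℝ)+(m:ℝ)+1)^3) := by
  have h := ((summable_nat_add_iff n).2 summable_cubes).mul_left 2
  refine h.congr fun m => ?_
  push_cast
  ring_nf

lemma tsum_cubes_shift (n : ℕ) :
    ∑' m : ℕ, 2 / ((n:ℝ)+(m:ℝ)+1)^3
      = 2 * (zeta3 - ∑ j ∈ Finset.range n, 1/((j:ℝ)+1)^3) := by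
  have key := Summable.sum_add_tsum_nat_add (f := fun j : ℕ => 1 / ((j:ℝ)+1)^3) n summable_cubes
  have h2 : ∑' m : ℕ, 1 / (((m+n:ℕ):ℝ)+1)^3 = ∑' m : ℕ, 1 / ((n:ℝ)+(m:ℝ)+1)^3 := by
    refine tsum_congr fun m => ?_
    push_cast
    ring_nf
  rw [h2] at key
  have h3 : ∑' m : ℕ, 2 / ((n:ℝ)+(m:ℝ)+1)^3 = 2 * ∑' m : ℕ, 1 / ((n:ℝ)+(m:ℝ)+1)^3 := by
    rw [← tsum_mul_left]
    refine tsum_congr fun m => ?_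
    ring
  have key2 : ∑ j ∈ Finset.range n, 1/((j:ℝ)+1)^3 + ∑' m : ℕ, 1 / ((n:ℝ)+(m:ℝ)+1)^3 = zeta3 := by
    simpa [zeta3] using key
  rw [h3]
  linarith

lemma integral_logsq_frac (n : ℕ) :
    ∫ u in Ioo (0:ℝ) 1, u ^ n * (Real.log u ^ 2 / (1 - u))
      = 2 * (zeta3 - ∑ j ∈ Finset.range n, 1/((j:ℝ)+1)^3) := by
  have hpt : ∀ u ∈ Ioo (0:ℝ) 1,
      u ^ n * (Real.log u ^ 2 / (1 - u)) = ∑' m : ℕ, u^(n+m) * Real.log u^2 := by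
    intro u hu
    have hgeo : ∑' m : ℕ, u ^ m = (1-u)⁻¹ :=
      tsum_geometric_of_lt_one hu.1.le hu.2
    have : ∑' m : ℕ, u^(n+m) * Real.log u^2
        = ∑' m : ℕ, (u^n * Real.log u^2) * u^m := by
      refine tsum_congr fun m => ?_
      rw [pow_add]
      ring
    rw [this, tsum_mul_left, hgeo]
    ring
  rw [MeasureTheory.setIntegral_congr_fun measurableSet_Ioo hpt]
  have hlin : ∀ m : ℕ, ∫⁻ u in Ioo (0:ℝ) 1, ‖u^(n+m) * Real.log u^2‖ₑ
      = ENNReal.ofReal (2/((n:ℝ)+(m:ℝ)+1)^3) := by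
    intro m
    have hnn : ∀ᵐ u ∂(volume.restrict (Ioo (0:ℝ) 1)), 0 ≤ u^(n+m) * Real.log u^2 := by
      refine (ae_restrict_iff' measurableSet_Ioo).2 (ae_of_all _ fun u hu => ?_)
      exact mul_nonneg (pow_nonneg hu.1.le _) (sq_nonneg _)
    have h1 : ∫⁻ u in Ioo (0:ℝ) 1, ‖u^(n+m) * Real.log u^2‖ₑ
        = ∫⁻ u in Ioo (0:ℝ) 1, ENNReal.ofReal (u^(n+m) * Real.log u^2) := by
      refine lintegral_congr_ae (hnn.mono fun u hu => ?_)
      simp only [Real.enorm_eq_ofReal hu]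
    rw [h1, ← MeasureTheory.ofReal_integral_eq_lintegral_ofReal (intOn_pow_log_sq (n+m)) hnn,
      integral_pow_mul_log_sq (n+m)]
    congr 1
    push_cast
    ring_nf
  rw [MeasureTheory.integral_tsum ?_ ?_]
  · have : ∀ m : ℕ, ∫ u in Ioo (0:ℝ) 1, u^(n+m) * Real.log u^2 = 2/((n:ℝ)+(m:ℝ)+1)^3 := by
      intro m
      rw [integral_pow_mul_log_sq (n+m)]
      congr 1
      push_cast
      ring_nf
    rw [tsum_congr this, tsum_cubes_shift]
  · intro m
    exact ((measurable_id.pow_const (n+m)).mul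
      (Real.measurable_log.pow_const 2)).aestronglyMeasurable
  · rw [tsum_congr hlin]
    rw [← ENNReal.ofReal_tsum_of_nonneg (fun m => by positivity) (summable_cubes_shift n)]
    exact ENNReal.ofReal_ne_top

noncomputable def Th (u : ℝ) : ℝ := ∫ v in (0:ℝ)..u, -Real.log v / (1 - v)

lemma Th_zero : Th 0 = 0 := integral_same

lemma measurable_hker : Measurable (fun v : ℝ => -Real.log v / (1 - v)) :=
  Real.measurable_log.neg.div (measurable_const.sub measurable_id)

lemma intOn_h_Icc : IntegrableOn (fun v : ℝ => -Real.log v / (1 - v)) (Icc (0:ℝ) 1) :=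
  intOn_h.congr_set_ae Ioo_ae_eq_Icc.symm

lemma h_ii {u : ℝ} (h0 : 0 ≤ u) (h1 : u ≤ 1) :
    IntervalIntegrable (fun v : ℝ => -Real.log v / (1 - v)) volume 0 u := by
  rw [intervalIntegrable_iff_integrableOn_Ioc_of_le h0]
  exact intOn_h_Icc.mono_set ((Ioc_subset_Ioc_right h1).trans Ioc_subset_Icc_self)

lemma Th_cont : ContinuousOn Th (Icc (0:ℝ) 1) := by
  have hprim := intervalIntegral.continuousOn_primitive (μ := volume)
    (f := fun v : ℝ => -Real.log v / (1 - v)) (a := 0) (b := 1) intOn_h_Icc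
  refine hprim.congr fun x hx => ?_
  rw [Th, integral_of_le hx.1]

lemma Th_deriv {u : ℝ} (hu : u ∈ Ioo (0:ℝ) 1) :
    HasDerivAt Th (-Real.log u / (1 - u)) u := by
  have hne : (1:ℝ) - u ≠ 0 := by
    have := hu.2
    intro h
    linarith
  have hcont : ContinuousAt (fun v : ℝ => -Real.log v / (1 - v)) u :=
    ((Real.continuousAt_log hu.1.ne').neg).div
      (continuousAt_const.sub continuousAt_id) hne
  have hmeas : StronglyMeasurableAtFilter (fun v : ℝ => -Real.log v / (1 - v)) (𝓝 u) :=
    measurable_hker.stronglyMeasurable.stronglyMeasurableAtFilter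
  exact intervalIntegral.integral_hasDerivAt_right (h_ii hu.1.le hu.2.le) hmeas hcont

lemma intOn_mul_ker {Φ k : ℝ → ℝ} (hΦ : ContinuousOn Φ (Icc 0 1))
    (hk : IntegrableOn k (Ioo (0:ℝ) 1)) (hkm : Measurable k) :
    IntegrableOn (fun x => Φ x * k x) (Ioo (0:ℝ) 1) := by
  obtain ⟨M, hM⟩ := isCompact_Icc.exists_bound_of_continuousOn hΦ
  refine Integrable.mono' (hk.norm.const_mul M)
    (((hΦ.mono Ioo_subset_Icc_self).aestronglyMeasurable measurableSet_Ioo).mul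
      hkm.aestronglyMeasurable)
    ((ae_restrict_iff' measurableSet_Ioo).2 (ae_of_all _ fun x hx => ?_))
  rw [Real.norm_eq_abs, abs_mul]
  have h1 : |Φ x| ≤ M := by
    have := hM x (Ioo_subset_Icc_self hx)
    rwa [Real.norm_eq_abs] at this
  have h2 : (0:ℝ) ≤ |k x| := abs_nonneg _
  calc |Φ x| * |k x| ≤ M * |k x| := mul_le_mul_of_nonneg_right h1 h2
    _ = M * ‖k x‖ := by rw [Real.norm_eq_abs]

lemma ibp01 (F G f g : ℝ → ℝ) (hF : ContinuousOn F (Icc 0 1)) (hG : ContinuousOn G (Icc 0 1))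
    (hf : ∀ x ∈ Ioo (0:ℝ) 1, HasDerivAt F (f x) x)
    (hg : ∀ x ∈ Ioo (0:ℝ) 1, HasDerivAt G (g x) x)
    (h1 : IntervalIntegrable (fun x => f x * G x) volume 0 1)
    (h2 : IntervalIntegrable (fun x => F x * g x) volume 0 1) :
    ∫ x in (0:ℝ)..1, f x * G x = F 1 * G 1 - F 0 * G 0 - ∫ x in (0:ℝ)..1, F x * g x := by
  have hFG : ∀ x ∈ Ioo (0:ℝ) 1,
      HasDerivAt (fun y => F y * G y) (f x * G x + F x * g x) x :=
    fun x hx => (hf x hx).mul (hg x hx)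
  have key := integral_eq_sub_of_hasDerivAt_of_le zero_le_one (hF.mul hG) hFG (h1.add h2)
  rw [integral_add h1 h2] at key
  simp only [Pi.mul_apply] at key
  linarith

lemma intOn_logker : IntegrableOn (fun u : ℝ => Real.log u) (Ioo (0:ℝ) 1) := by
  have := intOn_pow_log 0
  refine this.congr_fun ?_ measurableSet_Ioo
  intro x _
  simp

lemma intOn_logsqfracker : IntegrableOn (fun u : ℝ => Real.log u ^ 2 / (1-u)) (Ioo (0:ℝ) 1) := by
  have := intOn_pow_log_sq_frac 0
  refine this.congr_fun ?_ measurableSet_Ioo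
  intro x _
  simp

lemma Jval (p P R A B S : ℝ → ℝ)
    (hpc : Continuous p) (hPc : Continuous P) (hRc : Continuous R)
    (hAc : Continuous A) (hBc : Continuous B) (hSc : Continuous S)
    (hP : ∀ x ∈ Ioo (0:ℝ) 1, HasDerivAt P (p x) x)
    (hP1 : P 1 = 0)
    (hPR : ∀ x ∈ Ioo (0:ℝ) 1, P x = (1-x) * R x)
    (hA : ∀ x ∈ Ioo (0:ℝ) 1, HasDerivAt A (R x) x)
    (hB : ∀ x ∈ Ioo (0:ℝ) 1, HasDerivAt B (-(A x / x)) x)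
    (hB1 : B 1 = 0)
    (hBS : ∀ x ∈ Ioo (0:ℝ) 1, B x = (1-x) * S x)
    (hAlog : ContinuousOn (fun x => A x * Real.log x) (Icc 0 1)) :
    ∫ u in Ioo (0:ℝ) 1, p u * Th u ^ 2
      = 2 * (∫ u in Ioo (0:ℝ) 1, A u * (Real.log u ^ 2 / (1-u)))
        + 2 * (∫ u in Ioo (0:ℝ) 1, S u * Real.log u) := by
  set hk : ℝ → ℝ := fun v => -Real.log v / (1 - v) with hhk
  -- step 1 : first integration by parts
  have hG : ContinuousOn (fun x => Th x ^ 2) (Icc 0 1) := Th_cont.pow 2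
  have hg : ∀ x ∈ Ioo (0:ℝ) 1, HasDerivAt (fun y => Th y ^ 2) (2 * Th x * hk x) x := by
    intro x hx
    have := (Th_deriv hx).pow 2
    refine this.congr_deriv ?_
    simp [hhk]
    try ring
  have h1 : IntervalIntegrable (fun x => p x * Th x ^ 2) volume 0 1 := by
    apply ContinuousOn.intervalIntegrable
    rw [uIcc_of_le zero_le_one]
    exact hpc.continuousOn.mul (Th_cont.pow 2)
  have h2 : IntervalIntegrable (fun x => P x * (2 * Th x * hk x)) volume 0 1 := by
    rw [intervalIntegrable_iff_integrableOn_Ioo_of_le zero_le_one]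
    have base := intOn_mul_ker (Φ := fun x => 2 * P x * Th x) (k := hk)
      (((continuous_const.mul hPc).continuousOn).mul Th_cont) intOn_h measurable_hker
    refine base.congr_fun ?_ measurableSet_Ioo
    intro x _
    ring
  have key1 := ibp01 P (fun x => Th x ^ 2) p (fun x => 2 * Th x * hk x)
    hPc.continuousOn hG hP hg h1 h2
  have hz2 : Th 0 ^ 2 = 0 := by rw [Th_zero]; norm_num
  simp only [hP1, hz2, zero_mul, mul_zero, sub_zero, zero_sub] at key1
  -- step 2 : rewrite the integrand
  have step2 : ∫ x in (0:ℝ)..1, P x * (2 * Th x * hk x)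
      = ∫ x in Ioo (0:ℝ) 1, (-2) * ((R x * Real.log x) * Th x) := by
    rw [ii_Ioo]
    refine MeasureTheory.setIntegral_congr_fun measurableSet_Ioo fun x hx => ?_
    have hne : (1:ℝ) - x ≠ 0 := by
      have := hx.2
      intro hcon
      linarith
    rw [hPR x hx, hhk]
    field_simp
  -- step 3 : second integration by parts
  set Q : ℝ → ℝ := fun x => A x * Real.log x + B x with hQ
  have hQcont : ContinuousOn Q (Icc 0 1) := hAlog.add hBc.continuousOn
  have hq : ∀ x ∈ Ioo (0:ℝ) 1, HasDerivAt Q (R x * Real.log x) x := by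
    intro x hx
    have hd1 := (hA x hx).mul (Real.hasDerivAt_log hx.1.ne')
    have hd2 := hB x hx
    have := hd1.add hd2
    refine this.congr_deriv ?_
    ring
  have h1' : IntervalIntegrable (fun x => (R x * Real.log x) * Th x) volume 0 1 := by
    rw [intervalIntegrable_iff_integrableOn_Ioo_of_le zero_le_one]
    have base := intOn_mul_ker (Φ := fun x => R x * Th x) (k := fun x => Real.log x)
      (hRc.continuousOn.mul Th_cont) intOn_logker Real.measurable_log
    refine base.congr_fun ?_ measurableSet_Ioo
    intro x _
    ring
  have h2' : IntervalIntegrable (fun x => Q x * hk x) volume 0 1 := by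
    rw [intervalIntegrable_iff_integrableOn_Ioo_of_le zero_le_one]
    exact intOn_mul_ker hQcont intOn_h measurable_hker
  have key2 := ibp01 Q Th (fun x => R x * Real.log x) hk hQcont Th_cont hq
    (fun x hx => Th_deriv hx) h1' h2'
  have hQ1 : Q 1 = 0 := by
    rw [hQ]
    simp [Real.log_one, hB1]
  simp only [hQ1, Th_zero, zero_mul, mul_zero, sub_zero, zero_sub] at key2
  -- step 4 : expand Q * hk
  have intA : IntegrableOn (fun x => A x * (Real.log x ^ 2 / (1-x))) (Ioo (0:ℝ) 1) :=
    intOn_mul_ker hAc.continuousOn intOn_logsqfracker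
      ((Real.measurable_log.pow_const 2).div (measurable_const.sub measurable_id))
  have intS : IntegrableOn (fun x => S x * Real.log x) (Ioo (0:ℝ) 1) :=
    intOn_mul_ker hSc.continuousOn intOn_logker Real.measurable_log
  have step4 : ∫ x in (0:ℝ)..1, Q x * hk x
      = ∫ x in Ioo (0:ℝ) 1,
        (-(A x * (Real.log x ^ 2 / (1-x))) - S x * Real.log x) := by
    rw [ii_Ioo]
    refine MeasureTheory.setIntegral_congr_fun measurableSet_Ioo fun x hx => ?_
    have hne : (1:ℝ) - x ≠ 0 := by
      have := hx.2
      intro hcon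
      linarith
    simp only [hQ, hhk]
    rw [hBS x hx]
    field_simp
    ring
  have step4' : ∫ x in Ioo (0:ℝ) 1,
      (-(A x * (Real.log x ^ 2 / (1-x))) - S x * Real.log x)
      = -(∫ x in Ioo (0:ℝ) 1, A x * (Real.log x ^ 2 / (1-x)))
        - ∫ x in Ioo (0:ℝ) 1, S x * Real.log x := by
    calc ∫ x in Ioo (0:ℝ) 1, (-(A x * (Real.log x ^ 2 / (1-x))) - S x * Real.log x)
        = ∫ x in Ioo (0:ℝ) 1, -((A x * (Real.log x ^ 2 / (1-x))) + S x * Real.log x) := by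
          congr 1
          funext x
          ring
      _ = -∫ x in Ioo (0:ℝ) 1, ((A x * (Real.log x ^ 2 / (1-x))) + S x * Real.log x) :=
          MeasureTheory.integral_neg _
      _ = -((∫ x in Ioo (0:ℝ) 1, A x * (Real.log x ^ 2 / (1-x)))
            + ∫ x in Ioo (0:ℝ) 1, S x * Real.log x) := by
          rw [MeasureTheory.integral_add intA intS]
      _ = -(∫ x in Ioo (0:ℝ) 1, A x * (Real.log x ^ 2 / (1-x)))
            - ∫ x in Ioo (0:ℝ) 1, S x * Real.log x := by ring
  -- assemble
  have e1 : ∫ u in Ioo (0:ℝ) 1, p u * Th u ^ 2 = ∫ x in (0:ℝ)..1, p x * Th x ^ 2 :=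
    (ii_Ioo _).symm
  have e2 : ∫ x in Ioo (0:ℝ) 1, (-2) * ((R x * Real.log x) * Th x)
      = (-2) * ∫ x in Ioo (0:ℝ) 1, (R x * Real.log x) * Th x :=
    MeasureTheory.integral_const_mul _ _
  have e3 : ∫ x in Ioo (0:ℝ) 1, (R x * Real.log x) * Th x
      = ∫ x in (0:ℝ)..1, (R x * Real.log x) * Th x := (ii_Ioo _).symm
  rw [e1, key1, step2, e2, e3, key2, step4, step4']
  ring

lemma hasDerivAt_poly4 (a b c d e x : ℝ) :
    HasDerivAt (fun u : ℝ => a + b*u + c*u^2 + d*u^3 + e*u^4)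
      (b + 2*c*x + 3*d*x^2 + 4*e*x^3) x := by
  have h1 : HasDerivAt (fun u : ℝ => u) 1 x := hasDerivAt_id x
  have h2 := hasDerivAt_pow 2 x
  have h3 := hasDerivAt_pow 3 x
  have h4 := hasDerivAt_pow 4 x
  have key := ((((h1.const_mul b).const_add a).add (h2.const_mul c)).add
    (h3.const_mul d)).add (h4.const_mul e)
  refine key.congr_deriv ?_
  push_cast
  ring

lemma contOn_polyA_mul_log (b c d e : ℝ) :
    ContinuousOn (fun x : ℝ => (0 + b*x + c*x^2 + d*x^3 + e*x^4) * Real.log x)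
      (Icc 0 1) := by
  have hg : ContinuousOn (fun x : ℝ => b*(x^1 * Real.log x) + c*(x^2*Real.log x)
      + d*(x^3*Real.log x) + e*(x^4*Real.log x)) (Icc 0 1) :=
    (((continuousOn_const.mul (contOn_pow_mul_log 0)).add
      (continuousOn_const.mul (contOn_pow_mul_log 1))).add
      (continuousOn_const.mul (contOn_pow_mul_log 2))).add
      (continuousOn_const.mul (contOn_pow_mul_log 3))
  refine hg.congr fun x _ => ?_
  ring

lemma intA_eval (b c d e : ℝ) :
    ∫ u in Ioo (0:ℝ) 1, (0 + b*u + c*u^2 + d*u^3 + e*u^4) * (Real.log u ^ 2 / (1-u))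
      = b * (2*(zeta3 - 1)) + c * (2*(zeta3 - 9/8)) + d * (2*(zeta3 - 251/216))
        + e * (2*(zeta3 - 2035/1728)) := by
  have e1 : ∀ u ∈ Ioo (0:ℝ) 1,
      (0 + b*u + c*u^2 + d*u^3 + e*u^4) * (Real.log u ^ 2 / (1-u))
      = b*(u^1 * (Real.log u ^ 2 / (1-u))) + (c*(u^2 * (Real.log u ^ 2 / (1-u)))
        + (d*(u^3 * (Real.log u ^ 2 / (1-u))) + e*(u^4 * (Real.log u ^ 2 / (1-u))))) := by
    intro u _
    ring
  rw [MeasureTheory.setIntegral_congr_fun measurableSet_Ioo e1]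
  have I1 : IntegrableOn (fun u : ℝ => b*(u^1 * (Real.log u ^ 2 / (1-u)))) (Ioo (0:ℝ) 1) :=
    (intOn_pow_log_sq_frac 1).const_mul b
  have I2 : IntegrableOn (fun u : ℝ => c*(u^2 * (Real.log u ^ 2 / (1-u)))) (Ioo (0:ℝ) 1) :=
    (intOn_pow_log_sq_frac 2).const_mul c
  have I3 : IntegrableOn (fun u : ℝ => d*(u^3 * (Real.log u ^ 2 / (1-u)))) (Ioo (0:ℝ) 1) :=
    (intOn_pow_log_sq_frac 3).const_mul d
  have I4 : IntegrableOn (fun u : ℝ => e*(u^4 * (Real.log u ^ 2 / (1-u)))) (Ioo (0:ℝ) 1) :=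
    (intOn_pow_log_sq_frac 4).const_mul e
  have I34 : IntegrableOn (fun u : ℝ => d*(u^3 * (Real.log u ^ 2 / (1-u)))
      + e*(u^4 * (Real.log u ^ 2 / (1-u)))) (Ioo (0:ℝ) 1) := I3.add I4
  have I234 : IntegrableOn (fun u : ℝ => c*(u^2 * (Real.log u ^ 2 / (1-u)))
      + (d*(u^3 * (Real.log u ^ 2 / (1-u))) + e*(u^4 * (Real.log u ^ 2 / (1-u)))))
      (Ioo (0:ℝ) 1) := I2.add I34
  rw [MeasureTheory.integral_add I1 I234, MeasureTheory.integral_add I2 I34,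
    MeasureTheory.integral_add I3 I4]
  rw [MeasureTheory.integral_const_mul, MeasureTheory.integral_const_mul,
    MeasureTheory.integral_const_mul, MeasureTheory.integral_const_mul]
  rw [integral_logsq_frac 1, integral_logsq_frac 2, integral_logsq_frac 3,
    integral_logsq_frac 4]
  norm_num [Finset.sum_range_succ]
  ring

lemma intS_eval (a b c d : ℝ) :
    ∫ u in Ioo (0:ℝ) 1, (a + b*u + c*u^2 + d*u^3) * Real.log u
      = a * (-1) + b * (-(1/4)) + c * (-(1/9)) + d * (-(1/16)) := by
  have e1 : ∀ u ∈ Ioo (0:ℝ) 1,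
      (a + b*u + c*u^2 + d*u^3) * Real.log u
      = a*(u^0 * Real.log u) + (b*(u^1 * Real.log u)
        + (c*(u^2 * Real.log u) + d*(u^3 * Real.log u))) := by
    intro u _
    ring
  rw [MeasureTheory.setIntegral_congr_fun measurableSet_Ioo e1]
  have I1 : IntegrableOn (fun u : ℝ => a*(u^0 * Real.log u)) (Ioo (0:ℝ) 1) :=
    (intOn_pow_log 0).const_mul a
  have I2 : IntegrableOn (fun u : ℝ => b*(u^1 * Real.log u)) (Ioo (0:ℝ) 1) :=
    (intOn_pow_log 1).const_mul b
  have I3 : IntegrableOn (fun u : ℝ => c*(u^2 * Real.log u)) (Ioo (0:ℝ) 1) :=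
    (intOn_pow_log 2).const_mul c
  have I4 : IntegrableOn (fun u : ℝ => d*(u^3 * Real.log u)) (Ioo (0:ℝ) 1) :=
    (intOn_pow_log 3).const_mul d
  have I34 : IntegrableOn (fun u : ℝ => c*(u^2 * Real.log u) + d*(u^3 * Real.log u))
      (Ioo (0:ℝ) 1) := I3.add I4
  have I234 : IntegrableOn (fun u : ℝ => b*(u^1 * Real.log u)
      + (c*(u^2 * Real.log u) + d*(u^3 * Real.log u))) (Ioo (0:ℝ) 1) := I2.add I34
  rw [MeasureTheory.integral_add I1 I234, MeasureTheory.integral_add I2 I34,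
    MeasureTheory.integral_add I3 I4]
  rw [MeasureTheory.integral_const_mul, MeasureTheory.integral_const_mul,
    MeasureTheory.integral_const_mul, MeasureTheory.integral_const_mul]
  rw [integral_pow_mul_log 0, integral_pow_mul_log 1, integral_pow_mul_log 2,
    integral_pow_mul_log 3]
  norm_num
  ring

lemma cont_poly3 (a b c d : ℝ) : Continuous (fun u : ℝ => a + b*u + c*u^2 + d*u^3) := by
  fun_prop

lemma cont_poly4 (a b c d e : ℝ) :
    Continuous (fun u : ℝ => a + b*u + c*u^2 + d*u^3 + e*u^4) := by
  fun_prop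

set_option maxHeartbeats 1000000 in
lemma Jgen (p0 p1 p2 p3 P0 P1 P2 P3 P4 R0 R1 R2 R3 A1 A2 A3 A4 B0 B1 B2 B3 B4 S0 S1 S2 S3 : ℝ)
    (hPp : ∀ x : ℝ, P1 + 2*P2*x + 3*P3*x^2 + 4*P4*x^3 = p0 + p1*x + p2*x^2 + p3*x^3)
    (hP1 : P0 + P1 + P2 + P3 + P4 = 0)
    (hPR : ∀ x : ℝ, P0 + P1*x + P2*x^2 + P3*x^3 + P4*x^4
      = (1-x) * (R0 + R1*x + R2*x^2 + R3*x^3))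
    (hAR : ∀ x : ℝ, A1 + 2*A2*x + 3*A3*x^2 + 4*A4*x^3 = R0 + R1*x + R2*x^2 + R3*x^3)
    (hBA : ∀ x : ℝ, B1 + 2*B2*x + 3*B3*x^2 + 4*B4*x^3 = -(A1 + A2*x + A3*x^2 + A4*x^3))
    (hB1 : B0 + B1 + B2 + B3 + B4 = 0)
    (hBS : ∀ x : ℝ, B0 + B1*x + B2*x^2 + B3*x^3 + B4*x^4
      = (1-x) * (S0 + S1*x + S2*x^2 + S3*x^3)) :
    ∫ u in Ioo (0:ℝ) 1, (p0 + p1*u + p2*u^2 + p3*u^3) * Th u ^ 2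
      = 2 * (A1 * (2*(zeta3 - 1)) + A2 * (2*(zeta3 - 9/8)) + A3 * (2*(zeta3 - 251/216))
          + A4 * (2*(zeta3 - 2035/1728)))
        + 2 * (S0 * (-1) + S1 * (-(1/4)) + S2 * (-(1/9)) + S3 * (-(1/16))) := by
  have hJ := Jval (fun u => p0 + p1*u + p2*u^2 + p3*u^3)
    (fun u => P0 + P1*u + P2*u^2 + P3*u^3 + P4*u^4)
    (fun u => R0 + R1*u + R2*u^2 + R3*u^3)
    (fun u => 0 + A1*u + A2*u^2 + A3*u^3 + A4*u^4)
    (fun u => B0 + B1*u + B2*u^2 + B3*u^3 + B4*u^4)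
    (fun u => S0 + S1*u + S2*u^2 + S3*u^3)
    (cont_poly3 p0 p1 p2 p3) (cont_poly4 P0 P1 P2 P3 P4) (cont_poly3 R0 R1 R2 R3)
    (cont_poly4 0 A1 A2 A3 A4) (cont_poly4 B0 B1 B2 B3 B4) (cont_poly3 S0 S1 S2 S3)
    (fun x _ => by
      have h := hasDerivAt_poly4 P0 P1 P2 P3 P4 x
      convert h using 1
      exact (hPp x).symm)
    (by norm_num; linarith)
    (fun x _ => hPR x)
    (fun x _ => by
      have h := hasDerivAt_poly4 0 A1 A2 A3 A4 x
      convert h using 1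
      exact (hAR x).symm)
    (fun x hx => by
      have h := hasDerivAt_poly4 B0 B1 B2 B3 B4 x
      convert h using 1
      have hx0 : x ≠ 0 := hx.1.ne'
      have hdiv : (0 + A1*x + A2*x^2 + A3*x^3 + A4*x^4) / x
          = A1 + A2*x + A3*x^2 + A4*x^3 := by
        field_simp
        ring
      rw [hdiv]
      linarith [hBA x])
    (by norm_num; linarith)
    (fun x _ => hBS x)
    (contOn_polyA_mul_log A1 A2 A3 A4)
  rw [hJ, intA_eval, intS_eval]

lemma Jk0 : ∫ u in Ioo (0:ℝ) 1, ((4:ℝ) + -8*u + 0*u^2 + 0*u^3) * Th u ^ 2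
    = 8*zeta3 - 23/2 := by
  rw [Jgen 4 (-8) 0 0 0 4 (-4) 0 0 0 4 0 0 0 2 0 0 1 0 (-1) 0 0 1 1 0 0
    (fun x => by ring) (by norm_num) (fun x => by ring) (fun x => by ring)
    (fun x => by ring) (by norm_num) (fun x => by ring)]
  ring

lemma Jk1 : ∫ u in Ioo (0:ℝ) 1, ((0:ℝ) + 4*u + -8*u^2 + 0*u^3) * Th u ^ 2
    = 68/9*zeta3 - 3517/324 := by
  rw [Jgen 0 4 (-8) 0 (2/3) 0 2 (-8/3) 0 (2/3) (2/3) (8/3) 0 (2/3) (1/3) (8/9) 0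
    (61/54) (-2/3) (-1/6) (-8/27) 0 (61/54) (25/54) (8/27) 0
    (fun x => by ring) (by norm_num) (fun x => by ring) (fun x => by ring)
    (fun x => by ring) (by norm_num) (fun x => by ring)]
  ring

lemma Jk2 : ∫ u in Ioo (0:ℝ) 1, ((0:ℝ) + 0*u + 4*u^2 + -8*u^3) * Th u ^ 2
    = 62/9*zeta3 - 51127/5184 := by
  rw [Jgen 0 0 4 (-8) (2/3) 0 0 (4/3) (-2) (2/3) (2/3) (2/3) 2 (2/3) (1/3) (2/9) (1/2)
    (223/216) (-2/3) (-1/6) (-2/27) (-1/8) (223/216) (79/216) (43/216) (1/8)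
    (fun x => by ring) (by norm_num) (fun x => by ring) (fun x => by ring)
    (fun x => by ring) (by norm_num) (fun x => by ring)]
  ring

-- change of variables t ↦ (t²+1)⁻¹
lemma phi_deriv (t : ℝ) :
    HasDerivAt (fun t : ℝ => (t^2+1)⁻¹) (-(2*t) / (t^2+1)^2) t := by
  have h := ((hasDerivAt_pow 2 t).add_const 1).inv (by positivity)
  refine h.congr_deriv ?_
  push_cast
  ring_nf

lemma phi_image : (fun t : ℝ => (t^2+1)⁻¹) '' (Ioi 0) = Ioo 0 1 := by
  ext u
  constructor
  · rintro ⟨t, ht, rfl⟩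
    have ht0 : (0:ℝ) < t := ht
    constructor
    · positivity
    · have h1 : (1:ℝ) < t^2+1 := by nlinarith
      have := inv_lt_one_of_one_lt₀ h1
      simpa using this
  · intro hu
    refine ⟨Real.sqrt (1/u - 1), ?_, ?_⟩
    · have h1 : (0:ℝ) < 1/u - 1 := by
        have h2 : (1:ℝ) < 1/u := by
          rw [lt_div_iff₀ hu.1]
          linarith [hu.2]
        linarith
      exact Real.sqrt_pos.2 h1
    · have h1 : (0:ℝ) ≤ 1/u - 1 := by
        have h2 : (1:ℝ) ≤ 1/u := by
          rw [le_div_iff₀ hu.1]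
          linarith [hu.2]
        linarith
      show (Real.sqrt (1/u-1) ^ 2 + 1)⁻¹ = u
      rw [Real.sq_sqrt h1]
      have hu0 : u ≠ 0 := hu.1.ne'
      field_simp
      ring

lemma phi_inj : InjOn (fun t : ℝ => (t^2+1)⁻¹) (Ioi 0) := by
  intro a ha b hb hab
  simp only [] at hab
  have h1 : a^2 + 1 = b^2 + 1 := by
    have h2 : ((a:ℝ)^2+1) ≠ 0 := by positivity
    have h3 : ((b:ℝ)^2+1) ≠ 0 := by positivity
    field_simp at hab
    linarith [hab]
  have h2 : a^2 = b^2 := by linarith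
  have ha0 : (0:ℝ) ≤ a := le_of_lt ha
  have hb0 : (0:ℝ) ≤ b := le_of_lt hb
  calc a = Real.sqrt (a^2) := (Real.sqrt_sq ha0).symm
    _ = Real.sqrt (b^2) := by rw [h2]
    _ = b := Real.sqrt_sq hb0

lemma subst_main (g : ℝ → ℝ) :
    ∫ u in Ioo (0:ℝ) 1, g u
      = ∫ t in Ioi (0:ℝ), |(-(2*t) / (t^2+1)^2)| • g ((t^2+1)⁻¹) := by
  rw [← phi_image]
  exact integral_image_eq_integral_abs_deriv_smul measurableSet_Ioi
    (fun x _ => (phi_deriv x).hasDerivWithinAt) phi_inj g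

-- the tail integral W
noncomputable def gker (s : ℝ) : ℝ := Real.log (s+1) / (s*(s+1))

lemma measurable_gker : Measurable gker :=
  (Real.measurable_log.comp (measurable_id.add_const 1)).div
    (measurable_id.mul (measurable_id.add_const 1))

lemma log_le_two_sqrt {x : ℝ} (hx : 0 < x) : Real.log x ≤ 2 * Real.sqrt x := by
  have hs : 0 < Real.sqrt x := Real.sqrt_pos.2 hx
  have h1 : Real.log (Real.sqrt x) ≤ Real.sqrt x - 1 := Real.log_le_sub_one_of_pos hs
  have h2 : Real.log (Real.sqrt x) = Real.log x / 2 := by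
    rw [Real.log_sqrt hx.le]
  rw [h2] at h1
  linarith

lemma gker_nonneg {s : ℝ} (hs : 0 < s) : 0 ≤ gker s := by
  have h1 : (0:ℝ) ≤ Real.log (s+1) := Real.log_nonneg (by linarith)
  have h2 : (0:ℝ) < s*(s+1) := by nlinarith
  exact div_nonneg h1 h2.le

lemma intOn_gker : IntegrableOn gker (Ioi 0) := by
  have hsplit : Ioc (0:ℝ) 1 ∪ Ioi 1 = Ioi 0 := Ioc_union_Ioi_eq_Ioi zero_le_one
  rw [← hsplit]
  refine (integrableOn_union).2 ⟨?_, ?_⟩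
  · -- bounded by 1 on (0,1]
    refine Integrable.mono' (g := fun _ => (1:ℝ))
      (integrableOn_const measure_Ioc_lt_top.ne)
      measurable_gker.aestronglyMeasurable
      ((ae_restrict_iff' measurableSet_Ioc).2 (ae_of_all _ fun s hs => ?_))
    have hs0 : (0:ℝ) < s := hs.1
    rw [Real.norm_eq_abs, abs_of_nonneg (gker_nonneg hs0)]
    rw [gker, div_le_one (by nlinarith : (0:ℝ) < s*(s+1))]
    have hlog : Real.log (s+1) ≤ s := by
      have := Real.log_le_sub_one_of_pos (by linarith : (0:ℝ) < s+1)
      linarith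
    nlinarith
  · -- dominated by 3 √s / s² on (1,∞)
    have hrpow : IntegrableOn (fun s : ℝ => s ^ (-(3:ℝ)/2)) (Ioi 1) :=
      integrableOn_Ioi_rpow_of_lt (by norm_num) one_pos
    refine Integrable.mono' (g := fun s => 3 * s ^ (-(3:ℝ)/2))
      (hrpow.const_mul 3) measurable_gker.aestronglyMeasurable
      ((ae_restrict_iff' measurableSet_Ioi).2 (ae_of_all _ fun s hs => ?_))
    have hs1 : (1:ℝ) < s := hs
    have hs0 : (0:ℝ) < s := by linarith
    rw [Real.norm_eq_abs, abs_of_nonneg (gker_nonneg hs0)]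
    have hsq : 0 < Real.sqrt s := Real.sqrt_pos.2 hs0
    have hss : Real.sqrt s * Real.sqrt s = s := Real.mul_self_sqrt hs0.le
    -- log (s+1) ≤ 3 √s
    have hlog : Real.log (s+1) ≤ 3 * Real.sqrt s := by
      have h1 := log_le_two_sqrt (by linarith : (0:ℝ) < s+1)
      have h2 : Real.sqrt (s+1) ≤ Real.sqrt (2*s) := Real.sqrt_le_sqrt (by linarith)
      have h3 : Real.sqrt (2*s) = Real.sqrt 2 * Real.sqrt s := Real.sqrt_mul (by norm_num) s
      have h4 : Real.sqrt 2 ≤ 3/2 := by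
        rw [show (3/2:ℝ) = Real.sqrt ((3/2)^2) from (Real.sqrt_sq (by norm_num)).symm]
        apply Real.sqrt_le_sqrt
        norm_num
      have h5 : Real.sqrt 2 * Real.sqrt s ≤ (3/2) * Real.sqrt s :=
        mul_le_mul_of_nonneg_right h4 hsq.le
      calc Real.log (s+1) ≤ 2 * Real.sqrt (s+1) := h1
        _ ≤ 2 * (Real.sqrt 2 * Real.sqrt s) := by linarith
        _ ≤ 3 * Real.sqrt s := by linarith
    -- s^(-3/2) = √s / s²
    have hpow : (3:ℝ) * s ^ (-(3:ℝ)/2) = (3 * Real.sqrt s) / s^2 := by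
      rw [mul_div_assoc]
      congr 1
      rw [Real.sqrt_eq_rpow]
      rw [show ((s:ℝ)^2) = s ^ (2:ℝ) by rw [← Real.rpow_natCast s 2]; norm_num]
      rw [← Real.rpow_sub hs0]
      norm_num
    show Real.log (s+1) / (s*(s+1)) ≤ 3 * s ^ (-(3:ℝ)/2)
    rw [hpow]
    rw [div_le_div_iff₀ (by nlinarith : (0:ℝ) < s*(s+1)) (by positivity : (0:ℝ) < s^2)]
    have hkey : Real.log (s+1) * s^2 ≤ 3 * Real.sqrt s * s^2 :=
      mul_le_mul_of_nonneg_right hlog (by positivity)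
    have hkey2 : 3 * Real.sqrt s * s^2 ≤ 3 * Real.sqrt s * (s*(s+1)) := by
      have : s^2 ≤ s*(s+1) := by nlinarith
      exact mul_le_mul_of_nonneg_left this (by positivity)
    linarith

noncomputable def W (x : ℝ) : ℝ := ∫ s in Ioi x, gker s

lemma gker_ii {a b : ℝ} (ha : 0 < a) (hb : 0 < b) :
    IntervalIntegrable gker volume a b := by
  rw [intervalIntegrable_iff]
  refine intOn_gker.mono_set ?_
  rw [uIoc_eq_union]
  rintro x (hx | hx)
  · exact ha.trans hx.1
  · exact hb.trans hx.1

lemma W_split {a b : ℝ} (ha : 0 < a) (hab : a ≤ b) :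
    W a = (∫ s in a..b, gker s) + W b := by
  have hb : 0 < b := lt_of_lt_of_le ha hab
  have hunion : Ioc a b ∪ Ioi b = Ioi a := Ioc_union_Ioi_eq_Ioi hab
  have hdisj : Disjoint (Ioc a b) (Ioi b) := Ioc_disjoint_Ioi le_rfl
  have hint1 : IntegrableOn gker (Ioc a b) :=
    intOn_gker.mono_set fun x hx => lt_of_lt_of_le ha hx.1.le
  have hint2 : IntegrableOn gker (Ioi b) :=
    intOn_gker.mono_set fun x hx => lt_trans hb hx
  rw [W, ← hunion, MeasureTheory.setIntegral_union hdisj measurableSet_Ioi hint1 hint2,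
    intervalIntegral.integral_of_le hab]
  rfl

lemma W_shift {y : ℝ} (hy : 0 < y) : W y = W 1 - ∫ s in (1:ℝ)..y, gker s := by
  rcases le_total y 1 with h | h
  · rw [W_split hy h, intervalIntegral.integral_symm]
    ring
  · rw [W_split one_pos h]
    ring

lemma gker_contAt {x : ℝ} (hx : 0 < x) : ContinuousAt gker x := by
  have h1 : ContinuousAt (fun s : ℝ => Real.log (s+1)) x :=
    (Real.continuousAt_log (by linarith)).comp (continuousAt_id.add continuousAt_const)
  have h2 : ContinuousAt (fun s : ℝ => s*(s+1)) x :=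
    continuousAt_id.mul (continuousAt_id.add continuousAt_const)
  exact h1.div h2 (by nlinarith)

lemma W_hasDeriv {x : ℝ} (hx : 0 < x) : HasDerivAt W (-(gker x)) x := by
  have hI : HasDerivAt (fun y => ∫ s in (1:ℝ)..y, gker s) (gker x) x :=
    intervalIntegral.integral_hasDerivAt_right (gker_ii one_pos hx)
      measurable_gker.stronglyMeasurable.stronglyMeasurableAtFilter (gker_contAt hx)
  have hD : HasDerivAt (fun y => W 1 - ∫ s in (1:ℝ)..y, gker s) (-(gker x)) x :=
    hI.const_sub (W 1)
  refine hD.congr_of_eventuallyEq ?_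
  filter_upwards [IsOpen.mem_nhds isOpen_Ioi hx] with y hy
  exact W_shift hy

lemma V_hasDeriv {x : ℝ} (hx : 0 < x) :
    HasDerivAt (fun y : ℝ => Th ((y+1)⁻¹)) (-(gker x)) x := by
  have hu : (x+1)⁻¹ ∈ Ioo (0:ℝ) 1 := by
    constructor
    · positivity
    · have := inv_lt_one_of_one_lt₀ (by linarith : (1:ℝ) < x+1)
      simpa using this
  have hTh := Th_deriv hu
  have hinner : HasDerivAt (fun y : ℝ => (y+1)⁻¹) (-1/(x+1)^2) x := by
    have h := ((hasDerivAt_id x).add_const 1).inv (by positivity)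
    refine h.congr_deriv ?_
    rfl
  have hcomp := hTh.comp x hinner
  refine hcomp.congr_deriv ?_
  rw [Real.log_inv]
  have h1 : (x:ℝ)+1 ≠ 0 := by positivity
  have h2 : (x:ℝ) ≠ 0 := hx.ne'
  rw [gker]
  field_simp
  ring_nf
  rw [mul_comm x, mul_assoc, mul_inv_cancel₀ h2, mul_one]

lemma W_tendsto : Tendsto W atTop (𝓝 0) := by
  have hint1 : IntegrableOn gker (Ioi 1) := intOn_gker.mono_set fun x (hx : (1:ℝ) < x) => show (0:ℝ) < x from one_pos.trans hx
  have hI : Tendsto (fun y => ∫ s in (1:ℝ)..y, gker s) atTop (𝓝 (∫ s in Ioi 1, gker s)) :=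
    intervalIntegral_tendsto_integral_Ioi 1 hint1 tendsto_id
  have hW1 : W 1 = ∫ s in Ioi 1, gker s := rfl
  have h2 : Tendsto (fun y => W 1 - ∫ s in (1:ℝ)..y, gker s) atTop
      (𝓝 (W 1 - ∫ s in Ioi 1, gker s)) := (tendsto_const_nhds).sub hI
  rw [hW1, sub_self] at h2
  refine h2.congr' ?_
  filter_upwards [eventually_gt_atTop (0:ℝ)] with y hy
  exact (W_shift hy).symm

lemma V_tendsto : Tendsto (fun y : ℝ => Th ((y+1)⁻¹)) atTop (𝓝 0) := by
  have hcont0 : ContinuousWithinAt Th (Icc (0:ℝ) 1) 0 :=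
    Th_cont 0 (by norm_num)
  have hbase : Tendsto (fun y : ℝ => (y+1)⁻¹) atTop (𝓝 0) := by
    have h1 : Tendsto (fun y : ℝ => y+1) atTop atTop :=
      tendsto_atTop_add_const_right _ 1 tendsto_id
    exact h1.inv_tendsto_atTop
  have hto : Tendsto (fun y : ℝ => (y+1)⁻¹) atTop (𝓝[Icc (0:ℝ) 1] 0) := by
    refine tendsto_nhdsWithin_of_tendsto_nhds_of_eventually_within _ hbase ?_
    filter_upwards [eventually_ge_atTop (0:ℝ)] with y hy
    constructor
    · positivity
    · rw [inv_le_one_iff₀]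
      right
      linarith
  have := hcont0.tendsto.comp hto
  rwa [Th_zero] at this

lemma W_eq {x : ℝ} (hx : 0 < x) : W x = Th ((x+1)⁻¹) := by
  set D : ℝ → ℝ := fun y => W y - Th ((y+1)⁻¹) with hD
  have hDderiv : ∀ z ∈ Ioi (0:ℝ), HasDerivAt D 0 z := by
    intro z hz
    have := (W_hasDeriv hz).sub (V_hasDeriv hz)
    exact this.congr_deriv (by ring)
  have hconst : ∀ y, x ≤ y → D y = D x := by
    intro y hxy
    have hcont : ContinuousOn D (Icc x y) := by
      intro z hz
      exact ((hDderiv z (lt_of_lt_of_le hx hz.1)).continuousAt).continuousWithinAt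
    have hder : ∀ z ∈ Ico x y, HasDerivWithinAt D 0 (Ici z) z := fun z hz =>
      ((hDderiv z (lt_of_lt_of_le hx hz.1)).hasDerivWithinAt)
    exact constant_of_has_deriv_right_zero hcont hder y ⟨hxy, le_rfl⟩
  have hDlim : Tendsto D atTop (𝓝 0) := by
    have := W_tendsto.sub V_tendsto
    simpa using this
  have hDlim2 : Tendsto D atTop (𝓝 (D x)) := by
    have hc : Tendsto (fun _ : ℝ => D x) atTop (𝓝 (D x)) := tendsto_const_nhds
    refine Tendsto.congr' ?_ hc
    filter_upwards [eventually_ge_atTop x] with y hy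
    exact (hconst y hy).symm
  have : D x = 0 := tendsto_nhds_unique hDlim2 hDlim
  have hfin : W x - Th ((x+1)⁻¹) = 0 := this
  linarith

lemma theta0_eq {t : ℝ} (ht : 0 < t) : theta0 t = Th ((t^2+1)⁻¹) := by
  have hx : 0 < t^2 := by positivity
  have h := W_eq hx
  rw [theta0]
  exact h

lemma final0 : ∫ t in Ioi (0:ℝ), psi0 t * theta0 t ^ 2 = 8*zeta3 - 23/2 := by
  calc ∫ t in Ioi (0:ℝ), psi0 t * theta0 t ^ 2
      = ∫ t in Ioi (0:ℝ), |(-(2*t) / (t^2+1)^2)| •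
          ((fun u => ((4:ℝ) + -8*u + 0*u^2 + 0*u^3) * Th u ^ 2) ((t^2+1)⁻¹)) := by
        refine MeasureTheory.setIntegral_congr_fun measurableSet_Ioi fun t ht => ?_
        have ht0 : (0:ℝ) < t := ht
        show psi0 t * theta0 t ^ 2 = |(-(2*t) / (t^2+1)^2)| *
          (((4:ℝ) + -8*((t^2+1)⁻¹) + 0*((t^2+1)⁻¹)^2 + 0*((t^2+1)⁻¹)^3) * Th ((t^2+1)⁻¹) ^ 2)
        rw [theta0_eq ht0]
        have h1 : (t:ℝ)^2+1 ≠ 0 := by positivity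
        have habs : |(-(2*t) / (t^2+1)^2)| = (2*t)/(t^2+1)^2 := by
          rw [abs_div, abs_neg, abs_of_nonneg (by positivity : (0:ℝ) ≤ 2*t),
            abs_of_nonneg (by positivity : (0:ℝ) ≤ (t^2+1)^2)]
        rw [habs, psi0]
        field_simp
        ring
    _ = ∫ u in Ioo (0:ℝ) 1, ((4:ℝ) + -8*u + 0*u^2 + 0*u^3) * Th u ^ 2 :=
        (subst_main (fun u => ((4:ℝ) + -8*u + 0*u^2 + 0*u^3) * Th u ^ 2)).symm
    _ = 8*zeta3 - 23/2 := Jk0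

lemma final1 : ∫ t in Ioi (0:ℝ), psi0 t * zeta0 t * theta0 t ^ 2
    = 68/9*zeta3 - 3517/324 := by
  calc ∫ t in Ioi (0:ℝ), psi0 t * zeta0 t * theta0 t ^ 2
      = ∫ t in Ioi (0:ℝ), |(-(2*t) / (t^2+1)^2)| •
          ((fun u => ((0:ℝ) + 4*u + -8*u^2 + 0*u^3) * Th u ^ 2) ((t^2+1)⁻¹)) := by
        refine MeasureTheory.setIntegral_congr_fun measurableSet_Ioi fun t ht => ?_
        have ht0 : (0:ℝ) < t := ht
        show psi0 t * zeta0 t * theta0 t ^ 2 = |(-(2*t) / (t^2+1)^2)| *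
          (((0:ℝ) + 4*((t^2+1)⁻¹) + -8*((t^2+1)⁻¹)^2 + 0*((t^2+1)⁻¹)^3) * Th ((t^2+1)⁻¹) ^ 2)
        rw [theta0_eq ht0]
        have h1 : (t:ℝ)^2+1 ≠ 0 := by positivity
        have habs : |(-(2*t) / (t^2+1)^2)| = (2*t)/(t^2+1)^2 := by
          rw [abs_div, abs_neg, abs_of_nonneg (by positivity : (0:ℝ) ≤ 2*t),
            abs_of_nonneg (by positivity : (0:ℝ) ≤ (t^2+1)^2)]
        rw [habs, psi0, zeta0]
        field_simp
        ring
    _ = ∫ u in Ioo (0:ℝ) 1, ((0:ℝ) + 4*u + -8*u^2 + 0*u^3) * Th u ^ 2 :=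
        (subst_main (fun u => ((0:ℝ) + 4*u + -8*u^2 + 0*u^3) * Th u ^ 2)).symm
    _ = 68/9*zeta3 - 3517/324 := Jk1

lemma final2 : ∫ t in Ioi (0:ℝ), psi0 t * zeta0 t ^ 2 * theta0 t ^ 2
    = 62/9*zeta3 - 51127/5184 := by
  calc ∫ t in Ioi (0:ℝ), psi0 t * zeta0 t ^ 2 * theta0 t ^ 2
      = ∫ t in Ioi (0:ℝ), |(-(2*t) / (t^2+1)^2)| •
          ((fun u => ((0:ℝ) + 0*u + 4*u^2 + -8*u^3) * Th u ^ 2) ((t^2+1)⁻¹)) := by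
        refine MeasureTheory.setIntegral_congr_fun measurableSet_Ioi fun t ht => ?_
        have ht0 : (0:ℝ) < t := ht
        show psi0 t * zeta0 t ^ 2 * theta0 t ^ 2 = |(-(2*t) / (t^2+1)^2)| *
          (((0:ℝ) + 0*((t^2+1)⁻¹) + 4*((t^2+1)⁻¹)^2 + -8*((t^2+1)⁻¹)^3) * Th ((t^2+1)⁻¹) ^ 2)
        rw [theta0_eq ht0]
        have h1 : (t:ℝ)^2+1 ≠ 0 := by positivity
        have habs : |(-(2*t) / (t^2+1)^2)| = (2*t)/(t^2+1)^2 := by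
          rw [abs_div, abs_neg, abs_of_nonneg (by positivity : (0:ℝ) ≤ 2*t),
            abs_of_nonneg (by positivity : (0:ℝ) ≤ (t^2+1)^2)]
        rw [habs, psi0, zeta0]
        field_simp
        ring
    _ = ∫ u in Ioo (0:ℝ) 1, ((0:ℝ) + 0*u + 4*u^2 + -8*u^3) * Th u ^ 2 :=
        (subst_main (fun u => ((0:ℝ) + 0*u + 4*u^2 + -8*u^3) * Th u ^ 2)).symm
    _ = 62/9*zeta3 - 51127/5184 := Jk2

theorem stmt12 :
    (∫ t in Set.Ioi (0 : ℝ), psi0 t * theta0 t ^ 2) = 8 * zeta3 - 23 / 2 ∧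
    (∫ t in Set.Ioi (0 : ℝ), psi0 t * zeta0 t * theta0 t ^ 2)
      = 68 / 9 * zeta3 - 3517 / 324 ∧
    (∫ t in Set.Ioi (0 : ℝ), psi0 t * zeta0 t ^ 2 * theta0 t ^ 2)
      = 62 / 9 * zeta3 - 51127 / 5184 := by
  refine ⟨?_, ?_, ?_⟩
  · rw [final0]
  · rw [final1]
  · rw [final2]
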